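/- Let S and T be splits of the same 2n points, let g, g' ∈ ZMod (2n), set I* = min(cr_S(g,g'), cr_T(g,g')), and let p be the integer determined by f_S(g') + f_T(g') = n + p. Then f_S(g) + f_T(g) − 2·I* ≤ n − p. -/

import Mathlib

attribute [local instance] Classical.propDecidable

namespace MultiCrossing

/-- `x` lies strictly in the open clockwise arc from `a` to `b` on the circle `ZMod (2*n)`. -/
def StrictBtw (n : ℕ) (a b x : ZMod (2 * n)) : Prop :=
  0 < (x - a).val ∧ (x - a).val < (b - a).val

/-- Two chords (with four distinct endpoints) cross: exactly one of the endpoints of one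
chord lies in the open clockwise arc strictly between the endpoints of the other. -/
def Crosses (n : ℕ) (e f : Finset (ZMod (2 * n))) : Prop :=
  ∃ a b c d : ZMod (2 * n), e = {a, b} ∧ f = {c, d} ∧ a ≠ b ∧ c ≠ d ∧
    Disjoint e f ∧ Xor' (StrictBtw n a b c) (StrictBtw n a b d)

/-- A split: a non-crossing perfect matching of the `2*n` points `ZMod (2*n)`. -/
structure IsSplit (n : ℕ) (S : Finset (Finset (ZMod (2 * n)))) : Prop where
  card_two : ∀ e ∈ S, e.card = 2
  partitions : ∀ x : ZMod (2 * n), ∃! e, e ∈ S ∧ x ∈ e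
  noncrossing : ∀ e ∈ S, ∀ f ∈ S, ¬ Crosses n e f

/-- `A_g = {g, g+1, …, g+n-1}`: the clockwise half-circle starting at `g`. -/
def InArc (n : ℕ) (g x : ZMod (2 * n)) : Prop := (x - g).val < n

/-- A chord `e` intersects the diameter `D_g` if exactly one of its endpoints lies in `A_g`. -/
def HitsDiam (n : ℕ) (g : ZMod (2 * n)) (e : Finset (ZMod (2 * n))) : Prop :=
  (e.filter (fun x => InArc n g x)).card = 1

/-- `f_T(g)`: the number of chords of `T` intersecting the diameter `D_g`
(the paper's `|I(O,T)|` for the overstrand `O` in position `g`). -/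
noncomputable def hitCount (n : ℕ) (T : Finset (Finset (ZMod (2 * n)))) (g : ZMod (2 * n)) : ℕ :=
  (T.filter (fun e => HitsDiam n g e)).card

/-- `cr_S(g,g')`: the number of chords of `S` intersecting both diameters `D_g` and `D_g'`
(the paper's `|I(O,O',S)|`). -/
noncomputable def crossHitCount (n : ℕ) (S : Finset (Finset (ZMod (2 * n))))
    (g g' : ZMod (2 * n)) : ℕ :=
  (S.filter (fun e => HitsDiam n g e ∧ HitsDiam n g' e)).card

/-! ### Auxiliary lemmas -/

lemma val_add_rel (n : ℕ) [NeZero n] (x y : ZMod n) :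
    x.val + y.val = (x + y).val ∨ x.val + y.val = (x + y).val + n := by
  have h := ZMod.val_add x y
  have hx := ZMod.val_lt x
  have hy := ZMod.val_lt y
  have h2 := Nat.div_add_mod (x.val + y.val) n
  have hq : (x.val + y.val) / n < 2 := Nat.div_lt_of_lt_mul (by omega)
  rcases Nat.le_one_iff_eq_zero_or_eq_one.mp (by omega : (x.val + y.val) / n ≤ 1) with h0 | h1
  · rw [h0] at h2; omega
  · rw [h1] at h2; omega

lemma shift_rel (n : ℕ) (hn : 1 ≤ n) (g g' x : ZMod (2*n)) :
    (x - g').val + (g' - g).val = (x - g).val ∨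
    (x - g').val + (g' - g).val = (x - g).val + 2*n := by
  haveI : NeZero (2*n) := ⟨by omega⟩
  have := val_add_rel (2*n) (x - g') (g' - g)
  rwa [sub_add_sub_cancel] at this

/-- Core geometric computation: a chord from `Q = A_g \ A_{g'}` to `R = A_{g'} \ A_g`
and a chord from `P = A_g ∩ A_{g'}` to `C` (neither arc) must cross. -/
lemma core (n : ℕ) (hn : 1 ≤ n) (g g' a b c d : ZMod (2*n))
    (hne : g ≠ g') (hdn : (g' - g).val ≤ n)
    (ha : InArc n g a) (ha' : ¬ InArc n g' a)
    (hb : ¬ InArc n g b) (hb' : InArc n g' b)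
    (hc : InArc n g c) (hc' : InArc n g' c)
    (hd : ¬ InArc n g d) (hd' : ¬ InArc n g' d) :
    StrictBtw n a b c ∧ ¬ StrictBtw n a b d := by
  haveI : NeZero (2*n) := ⟨by omega⟩
  have hD : (g' - g).val ≠ 0 := by
    intro h
    have h2 := (ZMod.val_eq_zero _).mp h
    rw [sub_eq_zero] at h2
    exact hne h2.symm
  have ra := shift_rel n hn g g' a
  have rb := shift_rel n hn g g' b
  have rc := shift_rel n hn g g' c
  have rd := shift_rel n hn g g' d
  have tc : (c - a).val + (a - g).val = (c - g).val ∨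
      (c - a).val + (a - g).val = (c - g).val + 2*n := by
    have := val_add_rel (2*n) (c - a) (a - g); rwa [sub_add_sub_cancel] at this
  have tb : (b - a).val + (a - g).val = (b - g).val ∨
      (b - a).val + (a - g).val = (b - g).val + 2*n := by
    have := val_add_rel (2*n) (b - a) (a - g); rwa [sub_add_sub_cancel] at this
  have td : (d - a).val + (a - g).val = (d - g).val ∨
      (d - a).val + (a - g).val = (d - g).val + 2*n := by
    have := val_add_rel (2*n) (d - a) (a - g); rwa [sub_add_sub_cancel] at this
  have l1 : (a - g').val < 2*n := ZMod.val_lt _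
  have l2 : (b - g').val < 2*n := ZMod.val_lt _
  have l3 : (c - g').val < 2*n := ZMod.val_lt _
  have l4 : (d - g').val < 2*n := ZMod.val_lt _
  have l5 : (a - g).val < 2*n := ZMod.val_lt _
  have l6 : (b - g).val < 2*n := ZMod.val_lt _
  have l7 : (c - g).val < 2*n := ZMod.val_lt _
  have l8 : (d - g).val < 2*n := ZMod.val_lt _
  have l9 : (c - a).val < 2*n := ZMod.val_lt _
  have l10 : (b - a).val < 2*n := ZMod.val_lt _
  have l11 : (d - a).val < 2*n := ZMod.val_lt _
  unfold InArc at *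
  unfold StrictBtw
  omega

lemma build (n : ℕ) (hn : 1 ≤ n) (g g' : ZMod (2*n)) (hne : g ≠ g') (hdn : (g' - g).val ≤ n)
    (e1 e2 : Finset (ZMod (2*n))) (a b c d : ZMod (2*n))
    (he1 : e1 = {a, b}) (he2 : e2 = {c, d}) (hab : a ≠ b) (hcd : c ≠ d)
    (hdisj : Disjoint e1 e2)
    (ha : InArc n g a) (ha' : ¬ InArc n g' a)
    (hb : ¬ InArc n g b) (hb' : InArc n g' b)
    (hc : InArc n g c) (hc' : InArc n g' c)
    (hd : ¬ InArc n g d) (hd' : ¬ InArc n g' d) :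
    Crosses n e1 e2 := by
  obtain ⟨h1, h2⟩ := core n hn g g' a b c d hne hdn ha ha' hb hb' hc hc' hd hd'
  exact ⟨a, b, c, d, he1, he2, hab, hcd, hdisj, Or.inl ⟨h1, h2⟩⟩

lemma hits_pair (n : ℕ) (g : ZMod (2*n)) (a b : ZMod (2*n)) (hab : a ≠ b) :
    HitsDiam n g {a, b} ↔ Xor' (InArc n g a) (InArc n g b) := by
  unfold HitsDiam
  rw [Finset.card_filter, Finset.sum_pair hab]
  by_cases ha : InArc n g a <;> by_cases hb : InArc n g b <;> simp [ha, hb, Xor']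

/-- The dichotomy: a chord with both endpoints in the symmetric difference
`F = A_g Δ A_{g'}` hitting both diameters crosses a chord with both endpoints in the
complement `E` hitting both diameters. -/
lemma dichotomy (n : ℕ) (hn : 1 ≤ n) (g g' : ZMod (2*n)) (e1 e2 : Finset (ZMod (2*n)))
    (h1 : ∃ a b, a ≠ b ∧ e1 = ({a, b} : Finset (ZMod (2*n))))
    (h2 : ∃ a b, a ≠ b ∧ e2 = ({a, b} : Finset (ZMod (2*n))))
    (hit1g : HitsDiam n g e1) (hit1g' : HitsDiam n g' e1)
    (hit2g : HitsDiam n g e2) (hit2g' : HitsDiam n g' e2)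
    (hF : ∀ x ∈ e1, ¬ (InArc n g x ↔ InArc n g' x))
    (hE : ∀ x ∈ e2, (InArc n g x ↔ InArc n g' x)) :
    Crosses n e1 e2 := by
  haveI : NeZero (2*n) := ⟨by omega⟩
  obtain ⟨a0, b0, hab0, rfl⟩ := h1
  obtain ⟨c0, d0, hcd0, rfl⟩ := h2
  have hne : g ≠ g' := by
    intro h
    exact hF a0 (Finset.mem_insert_self _ _) (by rw [h])
  have hdisj : Disjoint ({a0, b0} : Finset (ZMod (2*n))) {c0, d0} :=
    Finset.disjoint_left.mpr (fun x hx1 hx2 => absurd (hE x hx2) (hF x hx1))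
  have hPa0 := hF a0 (by simp)
  have hPb0 := hF b0 (by simp)
  have hPc0 := hE c0 (by simp)
  have hPd0 := hE d0 (by simp)
  rw [hits_pair n g _ _ hab0] at hit1g
  rw [hits_pair n g' _ _ hab0] at hit1g'
  rw [hits_pair n g _ _ hcd0] at hit2g
  rw [hits_pair n g' _ _ hcd0] at hit2g'
  rcases le_or_gt ((g' - g).val) n with hle | hgt
  · -- orient by membership in A_g
    have horient1 : ∃ a b, ({a0, b0} : Finset (ZMod (2*n))) = {a, b} ∧ a ≠ b ∧
        InArc n g a ∧ ¬ InArc n g' a ∧ ¬ InArc n g b ∧ InArc n g' b := by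
      rcases hit1g with ⟨ha1, ha2⟩ | ⟨ha1, ha2⟩
      · exact ⟨a0, b0, rfl, hab0, ha1, fun h => hPa0 (iff_of_true ha1 h), ha2,
          by by_contra h; exact hPb0 (iff_of_false ha2 h)⟩
      · exact ⟨b0, a0, Finset.pair_comm a0 b0, hab0.symm, ha1,
          fun h => hPb0 (iff_of_true ha1 h), ha2,
          by by_contra h; exact hPa0 (iff_of_false ha2 h)⟩
    have horient2 : ∃ c d, ({c0, d0} : Finset (ZMod (2*n))) = {c, d} ∧ c ≠ d ∧
        InArc n g c ∧ InArc n g' c ∧ ¬ InArc n g d ∧ ¬ InArc n g' d := by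
      rcases hit2g with ⟨hc1, hc2⟩ | ⟨hc1, hc2⟩
      · exact ⟨c0, d0, rfl, hcd0, hc1, hPc0.mp hc1, hc2, fun h => hc2 (hPd0.mpr h)⟩
      · exact ⟨d0, c0, Finset.pair_comm c0 d0, hcd0.symm, hc1, hPd0.mp hc1, hc2,
          fun h => hc2 (hPc0.mpr h)⟩
    obtain ⟨a, b, he1, hab, q1, q2, q3, q4⟩ := horient1
    obtain ⟨c, d, he2, hcd, q5, q6, q7, q8⟩ := horient2
    exact build n hn g g' hne hle _ _ a b c d he1 he2 hab hcd hdisj q1 q2 q3 q4 q5 q6 q7 q8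
  · -- swap the roles of g and g'
    have hle' : (g - g').val ≤ n := by
      have hgg : g - g' = -(g' - g) := by ring
      have hne' : g' - g ≠ 0 := sub_ne_zero_of_ne (Ne.symm hne)
      have hlt : (g' - g).val < 2*n := ZMod.val_lt _
      rw [hgg, ZMod.neg_val, if_neg hne']
      omega
    have horient1 : ∃ a b, ({a0, b0} : Finset (ZMod (2*n))) = {a, b} ∧ a ≠ b ∧
        InArc n g' a ∧ ¬ InArc n g a ∧ ¬ InArc n g' b ∧ InArc n g b := by
      rcases hit1g' with ⟨ha1, ha2⟩ | ⟨ha1, ha2⟩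
      · exact ⟨a0, b0, rfl, hab0, ha1, fun h => hPa0 (iff_of_true h ha1), ha2,
          by by_contra h; exact hPb0 (iff_of_false h ha2)⟩
      · exact ⟨b0, a0, Finset.pair_comm a0 b0, hab0.symm, ha1,
          fun h => hPb0 (iff_of_true h ha1), ha2,
          by by_contra h; exact hPa0 (iff_of_false h ha2)⟩
    have horient2 : ∃ c d, ({c0, d0} : Finset (ZMod (2*n))) = {c, d} ∧ c ≠ d ∧
        InArc n g' c ∧ InArc n g c ∧ ¬ InArc n g' d ∧ ¬ InArc n g d := by
      rcases hit2g' with ⟨hc1, hc2⟩ | ⟨hc1, hc2⟩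
      · exact ⟨c0, d0, rfl, hcd0, hc1, hPc0.mpr hc1, hc2, fun h => hc2 (hPd0.mp h)⟩
      · exact ⟨d0, c0, Finset.pair_comm c0 d0, hcd0.symm, hc1, hPd0.mpr hc1, hc2,
          fun h => hc2 (hPc0.mp h)⟩
    obtain ⟨a, b, he1, hab, q1, q2, q3, q4⟩ := horient1
    obtain ⟨c, d, he2, hcd, q5, q6, q7, q8⟩ := horient2
    exact build n hn g' g (Ne.symm hne) hle' _ _ a b c d he1 he2 hab hcd hdisj q1 q2 q3 q4 q5 q6 q7 q8

lemma filter_IE {α : Type*} (s : Finset α) (p q : α → Prop) :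
    (s.filter p).card + (s.filter q).card =
      (s.filter fun a => Xor' (p a) (q a)).card + 2 * (s.filter fun a => p a ∧ q a).card := by
  simp only [Finset.card_filter]
  rw [← Finset.sum_add_distrib, Finset.mul_sum, ← Finset.sum_add_distrib]
  refine Finset.sum_congr rfl fun x _ => ?_
  by_cases hp : p x <;> by_cases hq : q x <;> simp [hp, hq, Xor']

lemma sum_inter (n : ℕ) (hn : 1 ≤ n) {Z : Finset (Finset (ZMod (2*n)))} (hZ : IsSplit n Z)
    (A : Finset (ZMod (2*n))) : ∑ e ∈ Z, (e ∩ A).card = A.card := by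
  haveI : NeZero (2*n) := ⟨by omega⟩
  have h1 : ∀ e ∈ Z, (e ∩ A).card = ∑ x ∈ A, if x ∈ e then 1 else 0 := by
    intro e _
    rw [← Finset.card_filter]
    congr 1
    ext x
    simp [Finset.mem_inter, Finset.mem_filter, and_comm]
  rw [Finset.sum_congr rfl h1, Finset.sum_comm]
  have h2 : ∀ x ∈ A, (∑ e ∈ Z, if x ∈ e then 1 else 0) = 1 := by
    intro x _
    rw [← Finset.card_filter]
    obtain ⟨e₀, ⟨he₀, hxe₀⟩, huniq⟩ := hZ.partitions x
    rw [Finset.card_eq_one]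
    refine ⟨e₀, ?_⟩
    ext f
    simp only [Finset.mem_filter, Finset.mem_singleton]
    constructor
    · rintro ⟨hf, hxf⟩; exact huniq f ⟨hf, hxf⟩
    · rintro rfl; exact ⟨he₀, hxe₀⟩
  rw [Finset.sum_congr rfl h2, Finset.sum_const, smul_eq_mul, mul_one]

/-- Counting bound for the split whose `both`-hitting chords all lie inside `A`. -/
lemma bound2 (n : ℕ) (hn : 1 ≤ n) {Z : Finset (Finset (ZMod (2*n)))} (hZ : IsSplit n Z)
    (g g' : ZMod (2*n)) (A : Finset (ZMod (2*n)))
    (hboth : ∀ e ∈ Z, HitsDiam n g e ∧ HitsDiam n g' e → e ⊆ A)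
    (hone : ∀ e ∈ Z, Xor' (HitsDiam n g e) (HitsDiam n g' e) → (e ∩ A).Nonempty) :
    2 * (Z.filter fun e => HitsDiam n g e ∧ HitsDiam n g' e).card +
      (Z.filter fun e => Xor' (HitsDiam n g e) (HitsDiam n g' e)).card ≤ A.card := by
  classical
  set B := Z.filter fun e => HitsDiam n g e ∧ HitsDiam n g' e with hB
  set U := Z.filter fun e => Xor' (HitsDiam n g e) (HitsDiam n g' e) with hU
  have hdisj : Disjoint B U := by
    rw [Finset.disjoint_left]
    intro e heB heU
    rw [hB, Finset.mem_filter] at heB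
    rw [hU, Finset.mem_filter] at heU
    rcases heU.2 with ⟨_, h⟩ | ⟨_, h⟩ <;> exact h (by tauto)
  have hsub : B ∪ U ⊆ Z := Finset.union_subset (Finset.filter_subset _ _) (Finset.filter_subset _ _)
  have key : 2 * B.card + U.card ≤ ∑ e ∈ B ∪ U, (e ∩ A).card := by
    rw [Finset.sum_union hdisj]
    have hBsum : ∑ e ∈ B, (e ∩ A).card = 2 * B.card := by
      rw [Finset.sum_congr rfl (fun e he => ?_), Finset.sum_const, smul_eq_mul, mul_comm]
      rw [hB, Finset.mem_filter] at he
      rw [Finset.inter_eq_left.mpr (hboth e he.1 he.2)]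
      exact hZ.card_two e he.1
    have hUsum : U.card ≤ ∑ e ∈ U, (e ∩ A).card := by
      calc U.card = ∑ _e ∈ U, 1 := by rw [Finset.sum_const, smul_eq_mul, mul_one]
      _ ≤ ∑ e ∈ U, (e ∩ A).card := Finset.sum_le_sum (fun e he => by
          rw [hU, Finset.mem_filter] at he
          exact Finset.card_pos.mpr (hone e he.1 he.2))
    omega
  calc 2 * B.card + U.card ≤ ∑ e ∈ B ∪ U, (e ∩ A).card := key
    _ ≤ ∑ e ∈ Z, (e ∩ A).card := Finset.sum_le_sum_of_subset hsub
    _ = A.card := sum_inter n hn hZ A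

/-- Counting bound: `xor`-hitting chords each have an endpoint in `A`. -/
lemma bound1 (n : ℕ) (hn : 1 ≤ n) {Z : Finset (Finset (ZMod (2*n)))} (hZ : IsSplit n Z)
    (g g' : ZMod (2*n)) (A : Finset (ZMod (2*n)))
    (hone : ∀ e ∈ Z, Xor' (HitsDiam n g e) (HitsDiam n g' e) → (e ∩ A).Nonempty) :
    (Z.filter fun e => Xor' (HitsDiam n g e) (HitsDiam n g' e)).card ≤ A.card := by
  classical
  set U := Z.filter fun e => Xor' (HitsDiam n g e) (HitsDiam n g' e) with hU
  have hUsum : U.card ≤ ∑ e ∈ U, (e ∩ A).card := by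
    calc U.card = ∑ _e ∈ U, 1 := by rw [Finset.sum_const, smul_eq_mul, mul_one]
    _ ≤ ∑ e ∈ U, (e ∩ A).card := Finset.sum_le_sum (fun e he => by
        rw [hU, Finset.mem_filter] at he
        exact Finset.card_pos.mpr (hone e he.1 he.2))
  calc U.card ≤ ∑ e ∈ U, (e ∩ A).card := hUsum
    _ ≤ ∑ e ∈ Z, (e ∩ A).card := Finset.sum_le_sum_of_subset (Finset.filter_subset _ _)
    _ = A.card := sum_inter n hn hZ A


lemma both_endpoints (n : ℕ) {Z : Finset (Finset (ZMod (2*n)))} (hZ : IsSplit n Z)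
    (g g' : ZMod (2*n)) (e : Finset (ZMod (2*n))) (he : e ∈ Z)
    (h1 : HitsDiam n g e) (h2 : HitsDiam n g' e) :
    (∀ x ∈ e, ¬ (InArc n g x ↔ InArc n g' x)) ∨ (∀ x ∈ e, (InArc n g x ↔ InArc n g' x)) := by
  obtain ⟨a, b, hab, rfl⟩ := Finset.card_eq_two.mp (hZ.card_two e he)
  rw [hits_pair n g a b hab] at h1
  rw [hits_pair n g' a b hab] at h2
  have key : (¬ (InArc n g a ↔ InArc n g' a) ∧ ¬ (InArc n g b ↔ InArc n g' b)) ∨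
      ((InArc n g a ↔ InArc n g' a) ∧ (InArc n g b ↔ InArc n g' b)) := by
    rcases h1 with ⟨p1, p2⟩ | ⟨p1, p2⟩ <;> rcases h2 with ⟨q1, q2⟩ | ⟨q1, q2⟩ <;> tauto
  rcases key with ⟨k1, k2⟩ | ⟨k1, k2⟩
  · left; intro x hx
    rcases Finset.mem_insert.mp hx with rfl | hx
    · exact k1
    · rw [Finset.mem_singleton] at hx; subst hx; exact k2
  · right; intro x hx
    rcases Finset.mem_insert.mp hx with rfl | hx
    · exact k1
    · rw [Finset.mem_singleton] at hx; subst hx; exact k2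

lemma xor_endpoints (n : ℕ) {Z : Finset (Finset (ZMod (2*n)))} (hZ : IsSplit n Z)
    (g g' : ZMod (2*n)) (e : Finset (ZMod (2*n))) (he : e ∈ Z)
    (hx : Xor' (HitsDiam n g e) (HitsDiam n g' e)) :
    (∃ x ∈ e, ¬ (InArc n g x ↔ InArc n g' x)) ∧ (∃ x ∈ e, (InArc n g x ↔ InArc n g' x)) := by
  obtain ⟨a, b, hab, rfl⟩ := Finset.card_eq_two.mp (hZ.card_two e he)
  rw [hits_pair n g a b hab, hits_pair n g' a b hab] at hx
  have ha : a ∈ ({a, b} : Finset (ZMod (2*n))) := by simp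
  have hb : b ∈ ({a, b} : Finset (ZMod (2*n))) := by simp
  have key : (¬ (InArc n g a ↔ InArc n g' a) ∧ (InArc n g b ↔ InArc n g' b)) ∨
      ((InArc n g a ↔ InArc n g' a) ∧ ¬ (InArc n g b ↔ InArc n g' b)) := by
    unfold Xor' at hx
    unfold Xor at hx
    tauto
  rcases key with ⟨k1, k2⟩ | ⟨k1, k2⟩
  · exact ⟨⟨a, ha, k1⟩, ⟨b, hb, k2⟩⟩
  · exact ⟨⟨b, hb, k2⟩, ⟨a, ha, k1⟩⟩

/-- Main inequality for one of the two splits: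
`f_X(g) + f_X(g') + f_Y(g) + f_Y(g') ≤ 2n + 2 cr_X(g,g')`. -/
lemma half (n : ℕ) (hn : 1 ≤ n) {X Y : Finset (Finset (ZMod (2*n)))}
    (hX : IsSplit n X) (hY : IsSplit n Y) (g g' : ZMod (2*n)) :
    hitCount n X g + hitCount n X g' + hitCount n Y g + hitCount n Y g'
      ≤ 2*n + 2 * crossHitCount n X g g' := by
  haveI : NeZero (2*n) := ⟨by omega⟩
  have hXie := filter_IE X (fun e => HitsDiam n g e) (fun e => HitsDiam n g' e)
  have hYie := filter_IE Y (fun e => HitsDiam n g e) (fun e => HitsDiam n g' e)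
  set ES : Finset (ZMod (2*n)) :=
    Finset.univ.filter (fun x => InArc n g x ↔ InArc n g' x) with hES
  set FS : Finset (ZMod (2*n)) :=
    Finset.univ.filter (fun x => ¬ (InArc n g x ↔ InArc n g' x)) with hFS
  have hcard : ES.card + FS.card = 2*n := by
    rw [hES, hFS, Finset.card_filter_add_card_filter_not, Finset.card_univ, ZMod.card]
  have honeX_FS : ∀ e ∈ X, Xor' (HitsDiam n g e) (HitsDiam n g' e) → (e ∩ FS).Nonempty := by
    intro e he hxor
    obtain ⟨⟨x, hxe, hxP⟩, _⟩ := xor_endpoints n hX g g' e he hxor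
    exact ⟨x, Finset.mem_inter.mpr ⟨hxe, Finset.mem_filter.mpr ⟨Finset.mem_univ x, hxP⟩⟩⟩
  have honeX_ES : ∀ e ∈ X, Xor' (HitsDiam n g e) (HitsDiam n g' e) → (e ∩ ES).Nonempty := by
    intro e he hxor
    obtain ⟨_, ⟨x, hxe, hxP⟩⟩ := xor_endpoints n hX g g' e he hxor
    exact ⟨x, Finset.mem_inter.mpr ⟨hxe, Finset.mem_filter.mpr ⟨Finset.mem_univ x, hxP⟩⟩⟩
  have honeY_FS : ∀ e ∈ Y, Xor' (HitsDiam n g e) (HitsDiam n g' e) → (e ∩ FS).Nonempty := by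
    intro e he hxor
    obtain ⟨⟨x, hxe, hxP⟩, _⟩ := xor_endpoints n hY g g' e he hxor
    exact ⟨x, Finset.mem_inter.mpr ⟨hxe, Finset.mem_filter.mpr ⟨Finset.mem_univ x, hxP⟩⟩⟩
  have honeY_ES : ∀ e ∈ Y, Xor' (HitsDiam n g e) (HitsDiam n g' e) → (e ∩ ES).Nonempty := by
    intro e he hxor
    obtain ⟨_, ⟨x, hxe, hxP⟩⟩ := xor_endpoints n hY g g' e he hxor
    exact ⟨x, Finset.mem_inter.mpr ⟨hxe, Finset.mem_filter.mpr ⟨Finset.mem_univ x, hxP⟩⟩⟩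
  by_cases hcase : ∃ e ∈ Y, (HitsDiam n g e ∧ HitsDiam n g' e) ∧
      ∀ x ∈ e, (InArc n g x ↔ InArc n g' x)
  · -- some both-hitter of `Y` lies inside `ES`; then all of them do
    obtain ⟨e2, he2, hh2, hP2⟩ := hcase
    have hbothY : ∀ e ∈ Y, HitsDiam n g e ∧ HitsDiam n g' e → e ⊆ ES := by
      intro e he hh
      rcases both_endpoints n hY g g' e he hh.1 hh.2 with hFside | hEside
      · exfalso
        refine hY.noncrossing e he e2 he2 (dichotomy n hn g g' e e2 ?_ ?_ hh.1 hh.2 hh2.1 hh2.2 hFside hP2)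
        · exact Finset.card_eq_two.mp (hY.card_two e he)
        · exact Finset.card_eq_two.mp (hY.card_two e2 he2)
      · intro x hx; exact Finset.mem_filter.mpr ⟨Finset.mem_univ x, hEside x hx⟩
    have bY := bound2 n hn hY g g' ES hbothY honeY_ES
    have bX := bound1 n hn hX g g' FS honeX_FS
    unfold hitCount crossHitCount at *
    omega
  · -- no both-hitter of `Y` lies inside `ES`; then all lie inside `FS`
    have hbothY : ∀ e ∈ Y, HitsDiam n g e ∧ HitsDiam n g' e → e ⊆ FS := by
      intro e he hh
      rcases both_endpoints n hY g g' e he hh.1 hh.2 with hFside | hEside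
      · intro x hx; exact Finset.mem_filter.mpr ⟨Finset.mem_univ x, hFside x hx⟩
      · exact absurd ⟨e, he, hh, hEside⟩ hcase
    have bY := bound2 n hn hY g g' FS hbothY honeY_FS
    have bX := bound1 n hn hX g g' ES honeX_ES
    unfold hitCount crossHitCount at *
    omega

/-- Let `S` and `T` be splits of the same `2n` points, `g, g' ∈ ZMod (2n)`, let
`I* = min(cr_S(g,g'), cr_T(g,g'))`, and let `p` be the integer determined by
`f_S(g') + f_T(g') = n + p`.  Then `f_S(g) + f_T(g) - 2·I* ≤ n - p`. -/
theorem hitCount_add_hitCount_sub_two_min_le (n : ℕ) (hn : 1 ≤ n)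
    (S T : Finset (Finset (ZMod (2 * n)))) (hS : IsSplit n S) (hT : IsSplit n T)
    (g g' : ZMod (2 * n)) (p : ℤ)
    (hp : (hitCount n S g' : ℤ) + (hitCount n T g' : ℤ) = (n : ℤ) + p) :
    (hitCount n S g : ℤ) + (hitCount n T g : ℤ)
      - 2 * (min (crossHitCount n S g g') (crossHitCount n T g g') : ℤ)
      ≤ (n : ℤ) - p := by
  have h1 := half n hn hS hT g g'
  have h2 := half n hn hT hS g g'
  rcases le_total (crossHitCount n S g g') (crossHitCount n T g g') with h | h
  · rw [min_eq_left (by exact_mod_cast h : ((crossHitCount n S g g' : ℤ)) ≤ (crossHitCount n T g g' : ℤ))]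
    have h1' := (Nat.cast_le (α := ℤ)).mpr h1
    push_cast at h1'
    linarith
  · rw [min_eq_right (by exact_mod_cast h : ((crossHitCount n T g g' : ℤ)) ≤ (crossHitCount n S g g' : ℤ))]
    have h2' := (Nat.cast_le (α := ℤ)).mpr h2
    push_cast at h2'
    linarith

end MultiCrossing
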